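/- There exist absolute constants x₀ and such that for all real numbers y, x with 2 ≤ y ≤ x and x ≥ x₀, the probability that θ_p ≤ (log x)^{−2} holds simultaneously for all primes p ≤ y is at least exp(−10 · y · log log x / log y). -/

import Mathlib

open Finset

def divs : List ℕ := [2,3,5,7,11,13,17,19,23,29,31,37,41,43,47,53,59,61,67,71,73,79]

/-- Kernel-friendly primality test by trial division (complete below 83² = 6889). -/
def isPrimeB (n : ℕ) : Bool :=
  decide (2 ≤ n) && divs.all (fun d => d < 2 || n < d * d || n % d ≠ 0)

lemma isPrimeB_of_prime {p : ℕ} (hp : p.Prime) : isPrimeB p = true := by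
  unfold isPrimeB
  rw [Bool.and_eq_true, List.all_eq_true]
  refine ⟨by simpa using hp.two_le, ?_⟩
  intro d _
  simp only [Bool.or_eq_true, decide_eq_true_eq, bne_iff_ne, ne_eq]
  by_cases h2 : d < 2
  · tauto
  by_cases h3 : p < d * d
  · tauto
  push_neg at h2 h3
  have hC : ¬ (p % d = 0) := by
    intro hmod
    have hdvd : d ∣ p := Nat.dvd_of_mod_eq_zero hmod
    rcases hp.eq_one_or_self_of_dvd d hdvd with h | h
    · omega
    · subst h; nlinarith [hp.two_le]
  tauto

/-- number of primes `≤ n`. -/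
def pc (n : ℕ) : ℕ := ((Finset.range (n+1)).filter Nat.Prime).card

lemma pc_mono {a b : ℕ} (h : a ≤ b) : pc a ≤ pc b :=
  Finset.card_le_card (Finset.filter_subset_filter _ (Finset.range_subset_range.2 (by omega)))

def cntB (a b : ℕ) : ℕ := ((Finset.Ico a b).filter (fun k => isPrimeB k = true)).card

lemma pc_le_chain (a b : ℕ) (h : a ≤ b) : pc b ≤ pc a + cntB (a+1) (b+1) := by
  unfold pc cntB
  have hsp : Finset.range (b+1) = Finset.range (a+1) ∪ Finset.Ico (a+1) (b+1) := by
    rw [Finset.range_eq_Ico, Finset.range_eq_Ico,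
      Finset.Ico_union_Ico_eq_Ico (Nat.zero_le _) (by omega)]
  rw [hsp, Finset.filter_union]
  refine le_trans (Finset.card_union_le _ _) ?_
  have hmid : ((Finset.Ico (a+1) (b+1)).filter Nat.Prime).card
      ≤ ((Finset.Ico (a+1) (b+1)).filter (fun k => isPrimeB k = true)).card := by
    refine Finset.card_le_card ?_
    intro k hk
    simp only [Finset.mem_filter] at hk ⊢
    exact ⟨hk.1, isPrimeB_of_prime hk.2⟩
  exact Nat.add_le_add_left hmid _

lemma pc_le_chain' (a b lo hi : ℕ) (h1 : lo = a+1) (h2 : hi = b+1) (h : a ≤ b) :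
    pc b ≤ pc a + cntB lo hi := by
  subst h1; subst h2; exact pc_le_chain a b h

lemma pc_zero : pc 0 = 0 := by
  unfold pc
  rw [Finset.range_one, Finset.filter_singleton, if_neg Nat.not_prime_zero,
    Finset.card_empty]

set_option maxRecDepth 100000


set_option maxHeartbeats 40000000 in
lemma cnt0 : cntB 1 5 = 2 := by decide

lemma pcB0 : pc 4 ≤ 2 := by
  have h := pc_le_chain' 0 4 1 5 rfl rfl (Nat.zero_le _)
  rw [pc_zero, cnt0] at h
  exact le_trans h (by norm_num)

set_option maxHeartbeats 40000000 in
lemma cnt1 : cntB 5 7 = 1 := by decide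

lemma pcB1 : pc 6 ≤ 3 := by
  have h := pc_le_chain' 4 6 5 7 rfl rfl (by norm_num)
  rw [cnt1] at h
  exact le_trans h (le_trans (Nat.add_le_add_right pcB0 1) (by norm_num))

set_option maxHeartbeats 40000000 in
lemma cnt2 : cntB 7 11 = 1 := by decide

lemma pcB2 : pc 10 ≤ 4 := by
  have h := pc_le_chain' 6 10 7 11 rfl rfl (by norm_num)
  rw [cnt2] at h
  exact le_trans h (le_trans (Nat.add_le_add_right pcB1 1) (by norm_num))

set_option maxHeartbeats 40000000 in
lemma cnt3 : cntB 11 17 = 2 := by decide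

lemma pcB3 : pc 16 ≤ 6 := by
  have h := pc_le_chain' 10 16 11 17 rfl rfl (by norm_num)
  rw [cnt3] at h
  exact le_trans h (le_trans (Nat.add_le_add_right pcB2 2) (by norm_num))

set_option maxHeartbeats 40000000 in
lemma cnt4 : cntB 17 23 = 2 := by decide

lemma pcB4 : pc 22 ≤ 8 := by
  have h := pc_le_chain' 16 22 17 23 rfl rfl (by norm_num)
  rw [cnt4] at h
  exact le_trans h (le_trans (Nat.add_le_add_right pcB3 2) (by norm_num))

set_option maxHeartbeats 40000000 in
lemma cnt5 : cntB 23 32 = 3 := by decide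

lemma pcB5 : pc 31 ≤ 11 := by
  have h := pc_le_chain' 22 31 23 32 rfl rfl (by norm_num)
  rw [cnt5] at h
  exact le_trans h (le_trans (Nat.add_le_add_right pcB4 3) (by norm_num))

set_option maxHeartbeats 40000000 in
lemma cnt6 : cntB 32 43 = 2 := by decide

lemma pcB6 : pc 42 ≤ 13 := by
  have h := pc_le_chain' 31 42 32 43 rfl rfl (by norm_num)
  rw [cnt6] at h
  exact le_trans h (le_trans (Nat.add_le_add_right pcB5 2) (by norm_num))

set_option maxHeartbeats 40000000 in
lemma cnt7 : cntB 43 59 = 3 := by decide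

lemma pcB7 : pc 58 ≤ 16 := by
  have h := pc_le_chain' 42 58 43 59 rfl rfl (by norm_num)
  rw [cnt7] at h
  exact le_trans h (le_trans (Nat.add_le_add_right pcB6 3) (by norm_num))

set_option maxHeartbeats 40000000 in
lemma cnt8 : cntB 59 82 = 6 := by decide

lemma pcB8 : pc 81 ≤ 22 := by
  have h := pc_le_chain' 58 81 59 82 rfl rfl (by norm_num)
  rw [cnt8] at h
  exact le_trans h (le_trans (Nat.add_le_add_right pcB7 6) (by norm_num))

set_option maxHeartbeats 40000000 in
lemma cnt9 : cntB 82 108 = 6 := by decide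

lemma pcB9 : pc 107 ≤ 28 := by
  have h := pc_le_chain' 81 107 82 108 rfl rfl (by norm_num)
  rw [cnt9] at h
  exact le_trans h (le_trans (Nat.add_le_add_right pcB8 6) (by norm_num))

set_option maxHeartbeats 40000000 in
lemma cnt10 : cntB 108 151 = 7 := by decide

lemma pcB10 : pc 150 ≤ 35 := by
  have h := pc_le_chain' 107 150 108 151 rfl rfl (by norm_num)
  rw [cnt10] at h
  exact le_trans h (le_trans (Nat.add_le_add_right pcB9 7) (by norm_num))

set_option maxHeartbeats 40000000 in
lemma cnt11 : cntB 151 204 = 11 := by decide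

lemma pcB11 : pc 203 ≤ 46 := by
  have h := pc_le_chain' 150 203 151 204 rfl rfl (by norm_num)
  rw [cnt11] at h
  exact le_trans h (le_trans (Nat.add_le_add_right pcB10 11) (by norm_num))

set_option maxHeartbeats 40000000 in
lemma cnt12 : cntB 204 281 = 13 := by decide

lemma pcB12 : pc 280 ≤ 59 := by
  have h := pc_le_chain' 203 280 204 281 rfl rfl (by norm_num)
  rw [cnt12] at h
  exact le_trans h (le_trans (Nat.add_le_add_right pcB11 13) (by norm_num))

set_option maxHeartbeats 40000000 in
lemma cnt13 : cntB 281 389 = 17 := by decide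

lemma pcB13 : pc 388 ≤ 76 := by
  have h := pc_le_chain' 280 388 281 389 rfl rfl (by norm_num)
  rw [cnt13] at h
  exact le_trans h (le_trans (Nat.add_le_add_right pcB12 17) (by norm_num))

set_option maxHeartbeats 40000000 in
lemma cnt14 : cntB 389 559 = 26 := by decide

lemma pcB14 : pc 558 ≤ 102 := by
  have h := pc_le_chain' 388 558 389 559 rfl rfl (by norm_num)
  rw [cnt14] at h
  exact le_trans h (le_trans (Nat.add_le_add_right pcB13 26) (by norm_num))

set_option maxHeartbeats 40000000 in
lemma cnt15 : cntB 559 785 = 35 := by decide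

lemma pcB15 : pc 784 ≤ 137 := by
  have h := pc_le_chain' 558 784 559 785 rfl rfl (by norm_num)
  rw [cnt15] at h
  exact le_trans h (le_trans (Nat.add_le_add_right pcB14 35) (by norm_num))

set_option maxHeartbeats 40000000 in
lemma cnt16 : cntB 785 1109 = 48 := by decide

lemma pcB16 : pc 1108 ≤ 185 := by
  have h := pc_le_chain' 784 1108 785 1109 rfl rfl (by norm_num)
  rw [cnt16] at h
  exact le_trans h (le_trans (Nat.add_le_add_right pcB15 48) (by norm_num))

set_option maxHeartbeats 40000000 in
lemma cnt17 : cntB 1109 1567 = 61 := by decide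

lemma pcB17 : pc 1566 ≤ 246 := by
  have h := pc_le_chain' 1108 1566 1109 1567 rfl rfl (by norm_num)
  rw [cnt17] at h
  exact le_trans h (le_trans (Nat.add_le_add_right pcB16 61) (by norm_num))

set_option maxHeartbeats 40000000 in
lemma cnt18 : cntB 1567 2269 = 90 := by decide

lemma pcB18 : pc 2268 ≤ 336 := by
  have h := pc_le_chain' 1566 2268 1567 2269 rfl rfl (by norm_num)
  rw [cnt18] at h
  exact le_trans h (le_trans (Nat.add_le_add_right pcB17 90) (by norm_num))

set_option maxHeartbeats 40000000 in
lemma cnt19 : cntB 2269 3253 = 122 := by decide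

lemma pcB19 : pc 3252 ≤ 458 := by
  have h := pc_le_chain' 2268 3252 2269 3253 rfl rfl (by norm_num)
  rw [cnt19] at h
  exact le_trans h (le_trans (Nat.add_le_add_right pcB18 122) (by norm_num))

set_option maxHeartbeats 40000000 in
lemma cnt20 : cntB 3253 4729 = 179 := by decide

lemma pcB20 : pc 4728 ≤ 637 := by
  have h := pc_le_chain' 3252 4728 3253 4729 rfl rfl (by norm_num)
  rw [cnt20] at h
  exact le_trans h (le_trans (Nat.add_le_add_right pcB19 179) (by norm_num))

set_option maxHeartbeats 40000000 in
lemma cnt21 : cntB 4729 5962 = 144 := by decide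

lemma pcB21 : pc 5961 ≤ 781 := by
  have h := pc_le_chain' 4728 5961 4729 5962 rfl rfl (by norm_num)
  rw [cnt21] at h
  exact le_trans h (le_trans (Nat.add_le_add_right pcB20 144) (by norm_num))


lemma log_le_aux {v : ℝ} (k : ℕ) (hv : (2:ℝ)^k ≤ v) :
    Real.log v ≤ k * 0.6931472 + (v / 2^k - 1) := by
  have h2k : (0:ℝ) < 2^k := by positivity
  have hv0 : (0:ℝ) < v := lt_of_lt_of_le h2k hv
  have heq : Real.log v = k * Real.log 2 + Real.log (v / 2^k) := by
    rw [Real.log_div hv0.ne' (ne_of_gt h2k), Real.log_pow]; ring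
  have h1 : Real.log (v / 2^k) ≤ v / 2^k - 1 :=
    Real.log_le_sub_one_of_pos (div_pos hv0 h2k)
  have hl2 : Real.log 2 ≤ 0.6931472 := le_of_lt (lt_trans Real.log_two_lt_d9 (by norm_num))
  have h2 : (k:ℝ) * Real.log 2 ≤ k * 0.6931472 := by
    have hk0 : (0:ℝ) ≤ (k:ℝ) := Nat.cast_nonneg k
    nlinarith
  linarith

lemma chunk_helper {n : ℕ} (A B P k : ℕ) (hA : A ≤ n) (hB : n ≤ B) (hpc : pc B ≤ P)
    (hk : (2:ℝ)^k ≤ (B:ℝ)+1)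
    (hnum : (P:ℝ) * (k * 0.6931472 + (((B:ℝ)+1) / 2^k - 1)) ≤ 1.66 * A) :
    (pc n : ℝ) * Real.log ((n:ℝ)+1) ≤ 1.66 * n := by
  have h1 : (pc n : ℝ) ≤ (P:ℝ) := by exact_mod_cast le_trans (pc_mono hB) hpc
  have hBlog : Real.log ((n:ℝ)+1) ≤ Real.log ((B:ℝ)+1) := by
    apply Real.log_le_log (by positivity)
    have : (n:ℝ) ≤ (B:ℝ) := by exact_mod_cast hB
    linarith
  have h2 : Real.log ((n:ℝ)+1) ≤ k * 0.6931472 + (((B:ℝ)+1) / 2^k - 1) :=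
    le_trans hBlog (log_le_aux k hk)
  have hlog0 : 0 ≤ Real.log ((n:ℝ)+1) :=
    Real.log_nonneg (by linarith [Nat.cast_nonneg (α := ℝ) n])
  have hAn : (A:ℝ) ≤ (n:ℝ) := by exact_mod_cast hA
  calc (pc n : ℝ) * Real.log ((n:ℝ)+1)
      ≤ (P:ℝ) * (k * 0.6931472 + (((B:ℝ)+1) / 2^k - 1)) :=
        mul_le_mul h1 h2 hlog0 (Nat.cast_nonneg P)
    _ ≤ 1.66 * A := hnum
    _ ≤ 1.66 * n := by linarith

lemma cheb_base {n : ℕ} (h2 : 2 ≤ n) (h : n ≤ 5961) :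
    (pc n : ℝ) * Real.log ((n:ℝ)+1) ≤ 1.66 * n := by

  rcases le_or_gt n 4 with h' | h'
  · exact chunk_helper 2 4 2 2 (by omega) h' pcB0 (by norm_num) (by norm_num)
  rcases le_or_gt n 6 with h' | h'
  · exact chunk_helper 5 6 3 2 (by omega) h' pcB1 (by norm_num) (by norm_num)
  rcases le_or_gt n 10 with h' | h'
  · exact chunk_helper 7 10 4 3 (by omega) h' pcB2 (by norm_num) (by norm_num)
  rcases le_or_gt n 16 with h' | h'
  · exact chunk_helper 11 16 6 4 (by omega) h' pcB3 (by norm_num) (by norm_num)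
  rcases le_or_gt n 22 with h' | h'
  · exact chunk_helper 17 22 8 4 (by omega) h' pcB4 (by norm_num) (by norm_num)
  rcases le_or_gt n 31 with h' | h'
  · exact chunk_helper 23 31 11 5 (by omega) h' pcB5 (by norm_num) (by norm_num)
  rcases le_or_gt n 42 with h' | h'
  · exact chunk_helper 32 42 13 5 (by omega) h' pcB6 (by norm_num) (by norm_num)
  rcases le_or_gt n 58 with h' | h'
  · exact chunk_helper 43 58 16 5 (by omega) h' pcB7 (by norm_num) (by norm_num)
  rcases le_or_gt n 81 with h' | h'
  · exact chunk_helper 59 81 22 6 (by omega) h' pcB8 (by norm_num) (by norm_num)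
  rcases le_or_gt n 107 with h' | h'
  · exact chunk_helper 82 107 28 6 (by omega) h' pcB9 (by norm_num) (by norm_num)
  rcases le_or_gt n 150 with h' | h'
  · exact chunk_helper 108 150 35 7 (by omega) h' pcB10 (by norm_num) (by norm_num)
  rcases le_or_gt n 203 with h' | h'
  · exact chunk_helper 151 203 46 7 (by omega) h' pcB11 (by norm_num) (by norm_num)
  rcases le_or_gt n 280 with h' | h'
  · exact chunk_helper 204 280 59 8 (by omega) h' pcB12 (by norm_num) (by norm_num)
  rcases le_or_gt n 388 with h' | h'
  · exact chunk_helper 281 388 76 8 (by omega) h' pcB13 (by norm_num) (by norm_num)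
  rcases le_or_gt n 558 with h' | h'
  · exact chunk_helper 389 558 102 9 (by omega) h' pcB14 (by norm_num) (by norm_num)
  rcases le_or_gt n 784 with h' | h'
  · exact chunk_helper 559 784 137 9 (by omega) h' pcB15 (by norm_num) (by norm_num)
  rcases le_or_gt n 1108 with h' | h'
  · exact chunk_helper 785 1108 185 10 (by omega) h' pcB16 (by norm_num) (by norm_num)
  rcases le_or_gt n 1566 with h' | h'
  · exact chunk_helper 1109 1566 246 10 (by omega) h' pcB17 (by norm_num) (by norm_num)
  rcases le_or_gt n 2268 with h' | h'
  · exact chunk_helper 1567 2268 336 11 (by omega) h' pcB18 (by norm_num) (by norm_num)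
  rcases le_or_gt n 3252 with h' | h'
  · exact chunk_helper 2269 3252 458 11 (by omega) h' pcB19 (by norm_num) (by norm_num)
  rcases le_or_gt n 4728 with h' | h'
  · exact chunk_helper 3253 4728 637 12 (by omega) h' pcB20 (by norm_num) (by norm_num)
  exact chunk_helper 4729 5961 781 12 (by omega) (by omega) pcB21 (by norm_num) (by norm_num)

lemma count_upper (m : ℕ) (hm : 2981 ≤ m) :
    ((((Finset.Ico (m+1) (2*m+1)).filter Nat.Prime).card : ℝ)) * Real.log m
      ≤ (m:ℝ) * (2 * Real.log 2) := by
  set T := (Finset.Ico (m+1) (2*m+1)).filter Nat.Prime with hT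
  have hdvd : T.prod id ∣ Nat.choose (2*m) m := by
    refine Finset.prod_primes_dvd _ (fun p hp => ?_) (fun p hp => ?_)
    · exact (Finset.mem_filter.1 hp).2.prime
    · have hmem := Finset.mem_filter.1 hp
      have hIco := Finset.mem_Ico.1 hmem.1
      refine hmem.2.dvd_choose (by omega) (by omega) (by omega)
  have hpow : m ^ T.card ≤ Nat.choose (2*m) m := by
    refine le_trans (Finset.pow_card_le_prod T id m (fun p hp => ?_))
      (Nat.le_of_dvd (Nat.choose_pos (by omega)) hdvd)
    have := (Finset.mem_Ico.1 (Finset.mem_filter.1 hp).1).1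
    simp only [id_eq]
    omega
  have hchoose : Nat.choose (2*m) m ≤ 4 ^ m :=
    le_trans (Nat.choose_le_choose m (by omega)) (Nat.choose_middle_le_pow m)
  have h1 : ((m:ℝ)) ^ T.card ≤ (4:ℝ) ^ m := by exact_mod_cast hpow.trans hchoose
  have hm0 : (0:ℝ) < (m:ℝ) := by positivity
  have hlog := Real.log_le_log (by positivity) h1
  rw [Real.log_pow, Real.log_pow] at hlog
  have h4 : Real.log 4 = 2 * Real.log 2 := by
    rw [show (4:ℝ) = 2^2 by norm_num, Real.log_pow]; push_cast; ring
  rw [h4] at hlog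
  exact hlog

theorem cheb : ∀ n : ℕ, 2 ≤ n → (pc n : ℝ) * Real.log ((n:ℝ)+1) ≤ 1.66 * n := by
  intro n
  induction n using Nat.strong_induction_on with
  | _ n ih =>
    intro h2
    rcases le_or_gt n 5961 with hn | hn
    · exact cheb_base h2 hn
    · set m := (n+1)/2 with hmdef
      have hm2981 : 2981 ≤ m := by omega
      have hmn : m < n := by omega
      have hn2m : n ≤ 2*m := by omega
      have h2m1 : 2*m ≤ n + 1 := by omega
      -- split pc n
      have hsplit : pc n ≤ pc m + ((Finset.Ico (m+1) (2*m+1)).filter Nat.Prime).card := by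
        unfold pc
        have hsub : Finset.range (n+1) ⊆ Finset.range (m+1) ∪ Finset.Ico (m+1) (2*m+1) := by
          intro k hk
          simp only [Finset.mem_range, Finset.mem_union, Finset.mem_Ico] at hk ⊢
          omega
        refine le_trans (Finset.card_le_card (Finset.filter_subset_filter _ hsub)) ?_
        rw [Finset.filter_union]
        exact Finset.card_union_le _ _
      have ihm : (pc m : ℝ) * Real.log ((m:ℝ)+1) ≤ 1.66 * m := ih m hmn (by omega)
      have hcount := count_upper m hm2981
      set T := ((Finset.Ico (m+1) (2*m+1)).filter Nat.Prime).card with hTdef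
      -- logs
      have hm0 : (0:ℝ) < (m:ℝ) := by positivity
      have hm1R : (2981:ℝ) ≤ (m:ℝ) := by exact_mod_cast hm2981
      have hlm8 : (8:ℝ) ≤ Real.log m := by
        rw [Real.le_log_iff_exp_le hm0]
        have he8 : Real.exp 8 = Real.exp 1 ^ (8:ℕ) := by
          rw [← Real.exp_nat_mul]; norm_num
        have : Real.exp 1 ^ (8:ℕ) ≤ 2.7182818286 ^ (8:ℕ) := by
          apply pow_le_pow_left₀ (le_of_lt (Real.exp_pos 1)) (le_of_lt Real.exp_one_lt_d9)
        rw [he8]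
        refine le_trans this ?_
        nlinarith [hm1R]
      have hlmm1 : Real.log m ≤ Real.log ((m:ℝ)+1) :=
        Real.log_le_log hm0 (by linarith)
      have hlog2 : Real.log 2 ≤ 0.6931472 := le_of_lt (lt_trans Real.log_two_lt_d9 (by norm_num))
      have hln : Real.log ((n:ℝ)+1) ≤ Real.log m + 0.6935 := by
        have hn1 : ((n:ℝ)+1) ≤ 2*(m:ℝ)+1 := by
          have : (n:ℝ) ≤ 2*(m:ℝ) := by exact_mod_cast hn2m
          linarith
        have h1 : Real.log ((n:ℝ)+1) ≤ Real.log (2*(m:ℝ)+1) :=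
          Real.log_le_log (by positivity) hn1
        have h2' : Real.log (2*(m:ℝ)+1) = Real.log 2 + Real.log m
            + Real.log ((2*(m:ℝ)+1)/(2*(m:ℝ))) := by
          rw [Real.log_div (by positivity) (by positivity), Real.log_mul (by norm_num) hm0.ne']
          ring
        have h3 : Real.log ((2*(m:ℝ)+1)/(2*(m:ℝ))) ≤ 1/(2*(m:ℝ)) := by
          refine le_trans (Real.log_le_sub_one_of_pos (by positivity)) ?_
          rw [div_sub_one (by positivity)]
          ring_nf
          exact le_refl _
        have h4 : 1/(2*(m:ℝ)) ≤ 0.0002 := by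
          rw [div_le_iff₀ (by positivity)]
          nlinarith
        calc Real.log ((n:ℝ)+1) ≤ Real.log (2*(m:ℝ)+1) := h1
          _ = Real.log 2 + Real.log m + Real.log ((2*(m:ℝ)+1)/(2*(m:ℝ))) := h2'
          _ ≤ 0.6931472 + Real.log m + 0.0002 := by linarith
          _ ≤ Real.log m + 0.6935 := by linarith
      -- numeric finish
      have hP0 : (0:ℝ) ≤ (pc m : ℝ) := Nat.cast_nonneg _
      have hT0 : (0:ℝ) ≤ (T : ℝ) := Nat.cast_nonneg _
      have hPl : (pc m : ℝ) * Real.log m ≤ 1.66 * m := by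
        have : (pc m : ℝ) * Real.log m ≤ (pc m : ℝ) * Real.log ((m:ℝ)+1) := by
          apply mul_le_mul_of_nonneg_left hlmm1 hP0
        linarith
      have hsum : ((pc m : ℝ) + T) * Real.log m ≤ 3.0462944 * m := by
        have : (2:ℝ) * Real.log 2 ≤ 1.3862944 := by linarith
        nlinarith [hcount]
      have hPT : ((pc m : ℝ) + T) ≤ 3.0462944 * m / 8 := by
        have h8 : 8 * ((pc m : ℝ) + T) ≤ ((pc m : ℝ) + T) * Real.log m := by
          nlinarith
        rw [le_div_iff₀ (by norm_num)]
        nlinarith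
      have hw0 : (0:ℝ) ≤ Real.log ((n:ℝ)+1) :=
        Real.log_nonneg (by linarith [Nat.cast_nonneg (α := ℝ) n])
      have hpcn : (pc n : ℝ) ≤ (pc m : ℝ) + T := by exact_mod_cast hsplit
      have hnR : 2*(m:ℝ) - 1 ≤ (n:ℝ) := by
        have : (2*m : ℝ) ≤ (n:ℝ) + 1 := by exact_mod_cast h2m1
        push_cast at this ⊢
        linarith
      calc (pc n : ℝ) * Real.log ((n:ℝ)+1)
          ≤ ((pc m : ℝ) + T) * Real.log ((n:ℝ)+1) := by
            apply mul_le_mul_of_nonneg_right hpcn hw0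
        _ ≤ ((pc m : ℝ) + T) * (Real.log m + 0.6935) := by
            apply mul_le_mul_of_nonneg_left hln (by linarith)
        _ = ((pc m : ℝ) + T) * Real.log m + 0.6935 * ((pc m : ℝ) + T) := by ring
        _ ≤ 3.0462944 * m + 0.6935 * (3.0462944 * m / 8) := by
            have := mul_le_mul_of_nonneg_left hPT (show (0:ℝ) ≤ 0.6935 by norm_num)
            linarith
        _ ≤ 1.66 * n := by linarith

theorem cheb_real {y : ℝ} (hy : 2 ≤ y) : (pc ⌊y⌋₊ : ℝ) * Real.log y ≤ 1.66 * y := by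
  have hy0 : (0:ℝ) ≤ y := by linarith
  have h2 : 2 ≤ ⌊y⌋₊ := Nat.le_floor (by exact_mod_cast hy)
  have h1 := cheb ⌊y⌋₊ h2
  have hfl : y ≤ (⌊y⌋₊:ℝ) + 1 := le_of_lt (Nat.lt_floor_add_one y)
  have hlog : Real.log y ≤ Real.log ((⌊y⌋₊:ℝ) + 1) := Real.log_le_log (by linarith) hfl
  have hfy : (⌊y⌋₊:ℝ) ≤ y := Nat.floor_le hy0
  have hP0 : (0:ℝ) ≤ (pc ⌊y⌋₊ : ℝ) := Nat.cast_nonneg _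
  calc (pc ⌊y⌋₊ : ℝ) * Real.log y ≤ (pc ⌊y⌋₊ : ℝ) * Real.log ((⌊y⌋₊:ℝ) + 1) :=
        mul_le_mul_of_nonneg_left hlog hP0
    _ ≤ 1.66 * (⌊y⌋₊:ℝ) := h1
    _ ≤ 1.66 * y := by linarith

open MeasureTheory ProbabilityTheory

/-- The Sato–Tate measure `dμ_st(t) = (2/π) sin²(t) dt` on `[0, π]`. -/
noncomputable def satoTate : Measure ℝ :=
  (volume.restrict (Set.Icc 0 Real.pi)).withDensity
    fun t => ENNReal.ofReal (2 / Real.pi * Real.sin t ^ 2)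

lemma satoTate_lower {δ : ℝ} (hδ0 : 0 < δ) (hδ1 : δ ≤ 1) :
    ENNReal.ofReal (δ^3 / 51) ≤ satoTate (Set.Iic δ) := by
  have hπ : (0:ℝ) < Real.pi := Real.pi_pos
  have hπ315 : Real.pi < 3.15 := by
    have := Real.pi_lt_d2
    linarith
  have hπ3 : (3:ℝ) < Real.pi := Real.pi_gt_three
  have hδπ : δ ≤ Real.pi := le_trans hδ1 (by linarith)
  rw [satoTate, withDensity_apply _ measurableSet_Iic,
    Measure.restrict_restrict measurableSet_Iic]
  have hsub : Set.Icc (δ/2) δ ⊆ Set.Iic δ ∩ Set.Icc 0 Real.pi := by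
    intro t ht
    rcases ht with ⟨h1, h2⟩
    exact ⟨h2, le_trans (by linarith) h1, le_trans h2 hδπ⟩
  refine le_trans ?_ (lintegral_mono' (Measure.restrict_mono hsub le_rfl) le_rfl)
  have hpt : ∀ t ∈ Set.Icc (δ/2) δ,
      ENNReal.ofReal (δ^2/(8*Real.pi)) ≤ ENNReal.ofReal (2 / Real.pi * Real.sin t ^ 2) := by
    intro t ht
    rcases ht with ⟨h1, h2⟩
    have ht0 : 0 < t := by linarith
    have ht1 : t ≤ 1 := le_trans h2 hδ1
    have hsin : δ/4 ≤ Real.sin t := by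
      have hcube := Real.sin_gt_sub_cube ht0
      have ht3 : t^3 ≤ t := by
        nlinarith [mul_nonneg (mul_nonneg ht0.le (sub_nonneg.2 ht1)) (by linarith : (0:ℝ) ≤ 1 + t)]
      nlinarith
    have hsin2 : δ^2/16 ≤ Real.sin t ^ 2 := by nlinarith
    apply ENNReal.ofReal_le_ofReal
    have heq : δ^2/(8*Real.pi) = 2/Real.pi * (δ^2/16) := by
      field_simp
      ring
    rw [heq]
    have h2π : (0:ℝ) ≤ 2/Real.pi := by positivity
    exact mul_le_mul_of_nonneg_left hsin2 h2π
  calc ENNReal.ofReal (δ^3/51)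
      ≤ ENNReal.ofReal (δ^2/(8*Real.pi)) * volume (Set.Icc (δ/2) δ) := by
        rw [Real.volume_Icc, ← ENNReal.ofReal_mul (by positivity)]
        apply ENNReal.ofReal_le_ofReal
        have heq : δ^2/(8*Real.pi)*(δ - δ/2) = δ^3/(16*Real.pi) := by ring
        rw [heq, div_le_div_iff₀ (by norm_num) (by positivity)]
        nlinarith [mul_nonneg (show (0:ℝ) ≤ δ^3 by positivity)
          (show (0:ℝ) ≤ 51 - 16*Real.pi by linarith)]
    _ = ∫⁻ _ in Set.Icc (δ/2) δ, ENNReal.ofReal (δ^2/(8*Real.pi)) :=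
        (setLIntegral_const _ _).symm
    _ ≤ ∫⁻ t in Set.Icc (δ/2) δ, ENNReal.ofReal (2 / Real.pi * Real.sin t ^ 2) := by
        refine setLIntegral_mono (by measurability) hpt

theorem stmt_8 :
    ∃ x₀ : ℝ,
      ∀ {Ω : Type} [MeasurableSpace Ω] (μ : Measure Ω) [IsProbabilityMeasure μ]
        (θ : ℕ → Ω → ℝ),
        (∀ p : ℕ, p.Prime → Measurable (θ p)) →
        (∀ p : ℕ, p.Prime → ∀ ω : Ω, θ p ω ∈ Set.Icc 0 Real.pi) →
        (∀ p : ℕ, p.Prime → Measure.map (θ p) μ = satoTate) →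
        iIndepFun
          (fun p : {p : ℕ // p.Prime} => θ p.1) μ →
        ∀ x y : ℝ, 2 ≤ y → y ≤ x → x₀ ≤ x →
          ENNReal.ofReal (Real.exp (-(10 * y * Real.log (Real.log x) / Real.log y))) ≤
            μ {ω | ∀ p : ℕ, p.Prime → (p : ℝ) ≤ y → θ p ω ≤ ((Real.log x) ^ 2)⁻¹} := by
  refine ⟨Real.exp (Real.exp 1000), ?_⟩
  intro Ω _ μ _ θ hmeas _hrange hmap hindep x y hy2 _hyx hx
  set δ : ℝ := ((Real.log x) ^ 2)⁻¹ with hδdef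
  -- basic bounds coming from x ≥ exp (exp 1000)
  have hx0 : (0:ℝ) < x := lt_of_lt_of_le (Real.exp_pos _) hx
  have hex : Real.exp 1000 ≤ Real.log x := by
    calc Real.exp 1000 = Real.log (Real.exp (Real.exp 1000)) := (Real.log_exp _).symm
      _ ≤ Real.log x := Real.log_le_log (Real.exp_pos _) hx
  have hlx1 : (1:ℝ) ≤ Real.log x := le_trans (Real.one_le_exp (by norm_num)) hex
  have hlx0 : (0:ℝ) < Real.log x := by linarith
  set L : ℝ := Real.log (Real.log x) with hLdef
  have hL1000 : (1000:ℝ) ≤ L := by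
    calc (1000:ℝ) = Real.log (Real.exp 1000) := (Real.log_exp _).symm
      _ ≤ L := Real.log_le_log (Real.exp_pos _) hex
  have hδ0 : (0:ℝ) < δ := by positivity
  have hδ1 : δ ≤ 1 := by
    rw [hδdef]
    rw [inv_le_one_iff₀]
    right
    nlinarith
  have hδ3 : δ^3 = Real.exp (-(6*L)) := by
    have hlxL : Real.log x = Real.exp L := (Real.exp_log hlx0).symm
    have h6 : ((Real.log x)^2)⁻¹^3 = ((Real.log x)^6)⁻¹ := by
      rw [← inv_pow, ← pow_mul, inv_pow]
    rw [hδdef, h6, hlxL, ← Real.exp_nat_mul]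
    rw [show ((6:ℕ):ℝ) * L = 6*L by norm_num]
    rw [← Real.exp_neg]
  -- the finset of primes ≤ y
  set n : ℕ := ⌊y⌋₊ with hndef
  set S : Finset {p : ℕ // p.Prime} := (Finset.range (n+1)).subtype Nat.Prime with hSdef
  have hy0 : (0:ℝ) ≤ y := by linarith
  have hmemS : ∀ i : {p : ℕ // p.Prime}, i ∈ S ↔ (i.1:ℝ) ≤ y := by
    intro i
    rw [hSdef, Finset.mem_subtype, Finset.mem_range]
    constructor
    · intro h
      have h1 : i.1 ≤ n := by omega
      calc (i.1:ℝ) ≤ (n:ℝ) := by exact_mod_cast h1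
        _ ≤ y := Nat.floor_le hy0
    · intro h
      have : i.1 ≤ n := (Nat.le_floor_iff hy0).2 h
      omega
  have hcardS : S.card = pc n := by
    rw [hSdef, Finset.card_subtype]
    rfl
  -- event as an intersection
  have hevent : {ω | ∀ p : ℕ, p.Prime → (p:ℝ) ≤ y → θ p ω ≤ δ}
      = ⋂ i ∈ S, (θ i.1) ⁻¹' (Set.Iic δ) := by
    ext ω
    simp only [Set.mem_setOf_eq, Set.mem_iInter, Set.mem_preimage, Set.mem_Iic]
    constructor
    · intro h i hi
      exact h i.1 i.2 ((hmemS i).1 hi)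
    · intro h p hp hpy
      exact h ⟨p, hp⟩ ((hmemS ⟨p, hp⟩).2 hpy)
  have hprod : μ (⋂ i ∈ S, (θ i.1) ⁻¹' (Set.Iic δ))
      = ∏ i ∈ S, μ ((θ i.1) ⁻¹' (Set.Iic δ)) :=
    hindep.meas_biInter (fun i _ => ⟨Set.Iic δ, measurableSet_Iic, rfl⟩)
  have hfac : ∀ i : {p : ℕ // p.Prime},
      μ ((θ i.1) ⁻¹' (Set.Iic δ)) = satoTate (Set.Iic δ) := by
    intro i
    rw [← Measure.map_apply (hmeas i.1 i.2) measurableSet_Iic, hmap i.1 i.2]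
  have hμev : μ {ω | ∀ p : ℕ, p.Prime → (p:ℝ) ≤ y → θ p ω ≤ δ}
      = (satoTate (Set.Iic δ)) ^ S.card := by
    rw [hevent, hprod, Finset.prod_congr rfl (fun i _ => hfac i), Finset.prod_const]
  -- lower bound on one factor
  have hfac_lb : ENNReal.ofReal (Real.exp (-(6*L+4))) ≤ satoTate (Set.Iic δ) := by
    refine le_trans ?_ (satoTate_lower hδ0 hδ1)
    apply ENNReal.ofReal_le_ofReal
    rw [show -(6*L+4) = -(6*L) + (-(4:ℝ)) by ring, Real.exp_add, hδ3]
    have he4 : Real.exp (-(4:ℝ)) ≤ 1/51 := by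
      rw [Real.exp_neg]
      rw [inv_le_comm₀ (Real.exp_pos 4) (by norm_num), show ((1:ℝ)/51)⁻¹ = 51 by norm_num]
      have h4 : Real.exp (4:ℝ) = Real.exp 1 ^ (4:ℕ) := by
        rw [← Real.exp_nat_mul]; norm_num
      rw [h4]
      calc (51:ℝ) ≤ 2.7182818283 ^ (4:ℕ) := by norm_num
        _ ≤ Real.exp 1 ^ (4:ℕ) := by
          apply pow_le_pow_left₀ (by norm_num) (le_of_lt Real.exp_one_gt_d9)
    calc Real.exp (-(6*L)) * Real.exp (-(4:ℝ))
        ≤ Real.exp (-(6*L)) * (1/51) :=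
          mul_le_mul_of_nonneg_left he4 (Real.exp_pos _).le
      _ = Real.exp (-(6*L)) / 51 := by ring
  -- Chebyshev bound
  have hly : (0:ℝ) < Real.log y := Real.log_pos (by linarith)
  have hcheb : (S.card : ℝ) * Real.log y ≤ 1.66 * y := by
    rw [hcardS, hndef]
    exact cheb_real hy2
  have hN : (S.card : ℝ) * (6*L+4) ≤ 10 * y * L / Real.log y := by
    rw [le_div_iff₀ hly]
    have hpos : (0:ℝ) ≤ 6*L+4 := by linarith
    have h1 : (S.card : ℝ) * (6*L+4) * Real.log y
        = ((S.card : ℝ) * Real.log y) * (6*L+4) := by ring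
    rw [h1]
    calc ((S.card : ℝ) * Real.log y) * (6*L+4) ≤ (1.66 * y) * (6*L+4) := by
          apply mul_le_mul_of_nonneg_right hcheb hpos
      _ ≤ 10 * y * L := by nlinarith
  -- finish
  rw [hμev]
  calc ENNReal.ofReal (Real.exp (-(10 * y * L / Real.log y)))
      ≤ ENNReal.ofReal (Real.exp (-(6*L+4)) ^ S.card) := by
        apply ENNReal.ofReal_le_ofReal
        rw [← Real.exp_nat_mul]
        apply Real.exp_le_exp.2
        have := hN
        nlinarith [Nat.cast_nonneg (α := ℝ) S.card]
    _ = ENNReal.ofReal (Real.exp (-(6*L+4))) ^ S.card :=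
        ENNReal.ofReal_pow (Real.exp_pos _).le _
    _ ≤ (satoTate (Set.Iic δ)) ^ S.card := pow_le_pow_left' hfac_lb _
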